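/- arXiv:2104.00785 — 2 statements merged into one kernel-verified Lean document; each statement's English description precedes it below -/
import Mathlib

section
/- Let (v_i)_{i∈[k]} be orthonormal vectors in an inner product space and ε ∈ (0, 1/(64k²)). Suppose (w_i)_{i∈[k]} satisfy ‖v_i − w_i‖ ≤ ε for each i. Then the vectors (u_i)_{i∈[k]} produced by the Gram–Schmidt orthonormalization of (w_1, …, w_k) satisfy ‖v_i − u_i‖ ≤ (64k + 1)ε for each i ∈ [k]. -/
open scoped InnerProductSpace

section Aux

variable {E : Type*} [NormedAddCommGroup E] [InnerProductSpace ℂ E]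

/-- Pythagoras for a finite orthogonal family. -/
lemma gs_aux_pythagoras {ι : Type*} (s : Finset ι) (f : ι → E)
    (h : ∀ a ∈ s, ∀ b ∈ s, a ≠ b → ⟪f a, f b⟫_ℂ = 0) :
    ‖∑ j ∈ s, f j‖ ^ 2 = ∑ j ∈ s, ‖f j‖ ^ 2 := by
  have h1 : (⟪∑ j ∈ s, f j, ∑ j ∈ s, f j⟫_ℂ) = ∑ a ∈ s, ⟪f a, f a⟫_ℂ := by
    rw [sum_inner]
    refine Finset.sum_congr rfl fun a ha => ?_
    rw [inner_sum]
    rw [Finset.sum_eq_single a (fun b hb hba => h a ha b hb (Ne.symm hba)) (fun ha' => absurd ha ha')]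
  have h2 := InnerProductSpace.norm_sq_eq_re_inner (𝕜 := ℂ) (∑ j ∈ s, f j)
  rw [h2, h1, map_sum]
  refine Finset.sum_congr rfl fun a _ => ?_
  rw [← InnerProductSpace.norm_sq_eq_re_inner (𝕜 := ℂ)]

/-- Squared norm of an orthonormal combination. -/
lemma gs_aux_on_norm {ι : Type*} {v : ι → E} (hv : Orthonormal ℂ v)
    (l : ι → ℂ) (s : Finset ι) :
    ‖∑ m ∈ s, l m • v m‖ ^ 2 = ∑ m ∈ s, ‖l m‖ ^ 2 := by
  have h1 := hv.inner_sum l l s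
  have h2 := InnerProductSpace.norm_sq_eq_re_inner (𝕜 := ℂ) (∑ m ∈ s, l m • v m)
  rw [h2, h1, map_sum]
  refine Finset.sum_congr rfl fun a _ => ?_
  rw [RCLike.conj_mul]
  norm_cast

/-- Key estimate: any element of the span of the perturbed vectors `w m`, `m < i`,
is almost orthogonal to `v i`. -/
lemma gs_aux_inner_bound {k : ℕ} {v w : Fin k → E} (hv : Orthonormal ℂ v) {ε : ℝ}
    (hε0 : 0 < ε) (hw : ∀ m, ‖v m - w m‖ ≤ ε) (hsmall : Real.sqrt k * ε ≤ 1 / 2)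
    (i : Fin k) {x : E} (hx : x ∈ Submodule.span ℂ (w '' Set.Iio i)) :
    ‖(⟪x, v i⟫_ℂ)‖ ≤ 2 * (Real.sqrt k * ε) * ‖x‖ := by
  obtain ⟨l, hls, rfl⟩ := (Finsupp.mem_span_image_iff_linearCombination ℂ).1 hx
  set t : Finset (Fin k) := Finset.Iio i with ht
  have hsub : l.support ⊆ t := fun m hm => Finset.mem_Iio.2 (hls hm)
  have hx : Finsupp.linearCombination ℂ w l = ∑ m ∈ t, l m • w m := by
    rw [Finsupp.linearCombination_apply, Finsupp.sum]
    exact Finset.sum_subset hsub (fun m _ hm => by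
      simp [Finsupp.notMem_support_iff.1 hm])
  set A : ℝ := Real.sqrt (∑ m ∈ t, ‖l m‖ ^ 2) with hA
  have hA0 : 0 ≤ A := Real.sqrt_nonneg _
  -- ℓ¹–ℓ² bound
  have hS1 : ∑ m ∈ t, ‖l m‖ ≤ Real.sqrt k * A := by
    have hcs : (∑ m ∈ t, ‖l m‖) ^ 2 ≤ (k : ℝ) * ∑ m ∈ t, ‖l m‖ ^ 2 := by
      calc (∑ m ∈ t, ‖l m‖) ^ 2 ≤ (t.card : ℝ) * ∑ m ∈ t, ‖l m‖ ^ 2 := by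
            exact sq_sum_le_card_mul_sum_sq
        _ ≤ (k : ℝ) * ∑ m ∈ t, ‖l m‖ ^ 2 := by
            refine mul_le_mul_of_nonneg_right ?_ (Finset.sum_nonneg fun m _ => sq_nonneg _)
            exact_mod_cast Finset.card_le_univ t |>.trans (by simp)
    have := Real.sqrt_le_sqrt hcs
    rwa [Real.sqrt_sq (Finset.sum_nonneg fun m _ => norm_nonneg _),
      Real.sqrt_mul (Nat.cast_nonneg k), ← hA] at this
  -- norm of the orthonormal part
  have hS2 : ‖∑ m ∈ t, l m • v m‖ = A := by
    rw [hA, ← gs_aux_on_norm hv l t, Real.sqrt_sq (norm_nonneg _)]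
  -- lower bound on ‖x‖
  have hS3 : A ≤ 2 * ‖Finsupp.linearCombination ℂ w l‖ := by
    have hdiff : ‖∑ m ∈ t, l m • w m - ∑ m ∈ t, l m • v m‖ ≤ Real.sqrt k * A * ε := by
      rw [← Finset.sum_sub_distrib]
      calc ‖∑ m ∈ t, (l m • w m - l m • v m)‖ ≤ ∑ m ∈ t, ‖l m • w m - l m • v m‖ :=
            norm_sum_le _ _
        _ ≤ ∑ m ∈ t, ‖l m‖ * ε := by
            refine Finset.sum_le_sum fun m _ => ?_
            rw [← smul_sub, norm_smul]
            refine mul_le_mul_of_nonneg_left ?_ (norm_nonneg _)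
            rw [← norm_neg]; simpa using hw m
        _ = (∑ m ∈ t, ‖l m‖) * ε := by rw [Finset.sum_mul]
        _ ≤ Real.sqrt k * A * ε := by
            exact mul_le_mul_of_nonneg_right hS1 hε0.le
    have h1 : A - Real.sqrt k * A * ε ≤ ‖Finsupp.linearCombination ℂ w l‖ := by
      rw [hx]
      have := norm_sub_norm_le (∑ m ∈ t, l m • v m) (∑ m ∈ t, l m • w m)
      rw [hS2] at this
      have h2 : ‖∑ m ∈ t, l m • v m - ∑ m ∈ t, l m • w m‖ ≤ Real.sqrt k * A * ε := by
        rw [norm_sub_rev]; exact hdiff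
      linarith
    have h3 : Real.sqrt k * A * ε ≤ A / 2 := by
      calc Real.sqrt k * A * ε = (Real.sqrt k * ε) * A := by ring
        _ ≤ (1 / 2) * A := mul_le_mul_of_nonneg_right hsmall hA0
        _ = A / 2 := by ring
    linarith
  -- the inner product estimate
  have hS4 : ‖(⟪Finsupp.linearCombination ℂ w l, v i⟫_ℂ)‖ ≤ Real.sqrt k * A * ε := by
    rw [hx, sum_inner]
    calc ‖∑ m ∈ t, ⟪l m • w m, v i⟫_ℂ‖ ≤ ∑ m ∈ t, ‖(⟪l m • w m, v i⟫_ℂ)‖ :=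
          norm_sum_le _ _
      _ ≤ ∑ m ∈ t, ‖l m‖ * ε := by
          refine Finset.sum_le_sum fun m hm => ?_
          have hmi : m ≠ i := ne_of_lt (Finset.mem_Iio.1 hm)
          have horth : (⟪v m, v i⟫_ℂ) = 0 := hv.2 hmi
          have : (⟪w m, v i⟫_ℂ) = ⟪w m - v m, v i⟫_ℂ := by
            rw [inner_sub_left, horth, sub_zero]
          rw [inner_smul_left, norm_mul, RCLike.norm_conj, this]
          refine mul_le_mul_of_nonneg_left ?_ (norm_nonneg _)
          calc ‖(⟪w m - v m, v i⟫_ℂ)‖ ≤ ‖w m - v m‖ * ‖v i‖ := norm_inner_le_norm _ _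
            _ ≤ ε * 1 := by
                refine mul_le_mul ?_ (le_of_eq (hv.1 i)) (norm_nonneg _) hε0.le
                rw [← norm_neg]; simpa using hw m
            _ = ε := mul_one ε
      _ = (∑ m ∈ t, ‖l m‖) * ε := by rw [Finset.sum_mul]
      _ ≤ Real.sqrt k * A * ε := mul_le_mul_of_nonneg_right hS1 hε0.le
  calc ‖(⟪Finsupp.linearCombination ℂ w l, v i⟫_ℂ)‖ ≤ Real.sqrt k * A * ε := hS4
    _ ≤ Real.sqrt k * (2 * ‖Finsupp.linearCombination ℂ w l‖) * ε := by
        refine mul_le_mul_of_nonneg_right (mul_le_mul_of_nonneg_left hS3 (Real.sqrt_nonneg _)) hε0.le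
    _ = 2 * (Real.sqrt k * ε) * ‖Finsupp.linearCombination ℂ w l‖ := by ring

end Aux

/-- Quantitative stability of Gram–Schmidt orthonormalization under small
perturbations of an orthonormal system. -/
theorem gramSchmidt_stable {E : Type*} [NormedAddCommGroup E]
    [InnerProductSpace ℂ E] {k : ℕ} (v w : Fin k → E)
    (hv : Orthonormal ℂ v) (ε : ℝ) (hε : ε ∈ Set.Ioo 0 (1 / (64 * (k : ℝ) ^ 2)))
    (hw : ∀ i, ‖v i - w i‖ ≤ ε) :
    ∀ i, ‖v i - @InnerProductSpace.gramSchmidtNormed ℂ E _ _ _ (Fin k) _ _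
      (inferInstance : WellFoundedLT (Fin k)) w i‖ ≤ (64 * k + 1) * ε := by
  intro i
  obtain ⟨hε0, hεlt⟩ := hε
  have hk1 : (1 : ℝ) ≤ k := by exact_mod_cast Nat.one_le_iff_ne_zero.2 (Fin.pos i).ne'
  have hk0 : (0 : ℝ) < k := by linarith
  have hεk : ε < 1 / (64 * (k : ℝ) ^ 2) := hεlt
  have hsqrtk : Real.sqrt k ≤ k := by
    nlinarith [Real.sq_sqrt hk0.le, Real.sqrt_nonneg (k : ℝ), Real.sqrt_le_sqrt hk1,
      Real.sqrt_one]
  have hone_le_sqrt : (1 : ℝ) ≤ Real.sqrt k := by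
    rw [show (1:ℝ) = Real.sqrt 1 by simp]; exact Real.sqrt_le_sqrt hk1
  have hεk2 : 64 * (k : ℝ) ^ 2 * ε ≤ 1 := by
    have h64 : (0:ℝ) < 64 * (k : ℝ) ^ 2 := by positivity
    nlinarith [(lt_div_iff₀ h64).1 hεlt]
  have hsmall : Real.sqrt k * ε ≤ 1 / 2 := by
    have : Real.sqrt k * ε ≤ k * ε := mul_le_mul_of_nonneg_right hsqrtk hε0.le
    nlinarith
  set g : Fin k → E := @InnerProductSpace.gramSchmidt ℂ E _ _ _ (Fin k) _ _ (inferInstance : WellFoundedLT (Fin k)) w with hg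
  set t : Finset (Fin k) := Finset.Iio i with ht
  -- decomposition of w i
  have hdef := @InnerProductSpace.gramSchmidt_def' ℂ E _ _ _ (Fin k) _ _ (inferInstance : WellFoundedLT (Fin k)) w i
  -- bound each projection term
  have hterm : ∀ j ∈ t,
      ‖((ℂ ∙ g j).starProjection (w i))‖ ≤ 3 * Real.sqrt k * ε := by
    intro j hj
    have hji : j < i := Finset.mem_Iio.1 hj
    rw [Submodule.starProjection_singleton]
    by_cases hgj : g j = 0
    · rw [hgj, smul_zero, norm_zero]; positivity
    have hmem : g j ∈ Submodule.span ℂ (w '' Set.Iio i) := by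
      refine Submodule.span_mono (Set.image_mono (f := w) ?_)
        (@InnerProductSpace.gramSchmidt_mem_span ℂ E _ _ _ (Fin k) _ _ (inferInstance : WellFoundedLT (Fin k)) w j j (le_refl j))
      exact fun m hm => lt_of_le_of_lt hm hji
    have hinner : ‖(⟪g j, w i⟫_ℂ)‖ ≤ (2 * Real.sqrt k * ε + ε) * ‖g j‖ := by
      have h1 : (⟪g j, w i⟫_ℂ) = ⟪g j, v i⟫_ℂ + ⟪g j, w i - v i⟫_ℂ := by
        rw [← inner_add_right]; congr 1; abel
      have h2 : ‖(⟪g j, v i⟫_ℂ)‖ ≤ 2 * (Real.sqrt k * ε) * ‖g j‖ :=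
        gs_aux_inner_bound hv hε0 hw hsmall i hmem
      have h3 : ‖(⟪g j, w i - v i⟫_ℂ)‖ ≤ ‖g j‖ * ε := by
        calc ‖(⟪g j, w i - v i⟫_ℂ)‖ ≤ ‖g j‖ * ‖w i - v i‖ := norm_inner_le_norm _ _
          _ ≤ ‖g j‖ * ε := by
              refine mul_le_mul_of_nonneg_left ?_ (norm_nonneg _)
              rw [← norm_neg]; simpa using hw i
      calc ‖(⟪g j, w i⟫_ℂ)‖ ≤ ‖(⟪g j, v i⟫_ℂ)‖ + ‖(⟪g j, w i - v i⟫_ℂ)‖ := by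
            rw [h1]; exact norm_add_le _ _
        _ ≤ 2 * (Real.sqrt k * ε) * ‖g j‖ + ‖g j‖ * ε := add_le_add h2 h3
        _ = (2 * Real.sqrt k * ε + ε) * ‖g j‖ := by ring
    have hgj0 : 0 < ‖g j‖ := norm_pos_iff.2 hgj
    rw [norm_smul, norm_div, RCLike.norm_ofReal, abs_of_nonneg (sq_nonneg _),
      div_mul_eq_mul_div, pow_two, ← div_div, mul_div_assoc, div_self hgj0.ne', mul_one,
      div_le_iff₀ hgj0]
    calc ‖(⟪g j, w i⟫_ℂ)‖ ≤ (2 * Real.sqrt k * ε + ε) * ‖g j‖ := hinner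
      _ ≤ 3 * Real.sqrt k * ε * ‖g j‖ := by
          refine mul_le_mul_of_nonneg_right ?_ hgj0.le
          nlinarith
  -- Pythagoras on the sum of projections
  have hsum : ‖∑ j ∈ t, ((ℂ ∙ g j).starProjection (w i))‖ ≤ 3 * (k : ℝ) * ε := by
    have horth : ∀ a ∈ t, ∀ b ∈ t, a ≠ b →
        (⟪((ℂ ∙ g a).starProjection (w i)),
          ((ℂ ∙ g b).starProjection (w i))⟫_ℂ) = 0 := by
      intro a _ b _ hab
      rw [Submodule.starProjection_singleton, Submodule.starProjection_singleton,
        inner_smul_left, inner_smul_right, @InnerProductSpace.gramSchmidt_orthogonal ℂ E _ _ _ (Fin k) _ _ (inferInstance : WellFoundedLT (Fin k)) w a b hab,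
        mul_zero, mul_zero]
    have hpyth := gs_aux_pythagoras t _ horth
    have hbd : ∑ j ∈ t, ‖((ℂ ∙ g j).starProjection (w i))‖ ^ 2
        ≤ (k : ℝ) * (3 * Real.sqrt k * ε) ^ 2 := by
      calc ∑ j ∈ t, ‖((ℂ ∙ g j).starProjection (w i))‖ ^ 2
          ≤ ∑ _j ∈ t, (3 * Real.sqrt k * ε) ^ 2 := by
            refine Finset.sum_le_sum fun j hj => ?_
            have := hterm j hj
            have h0 : (0:ℝ) ≤ 3 * Real.sqrt k * ε := by positivity
            nlinarith [norm_nonneg ((ℂ ∙ g j).starProjection (w i))]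
        _ = (t.card : ℝ) * (3 * Real.sqrt k * ε) ^ 2 := by
            rw [Finset.sum_const, nsmul_eq_mul]
        _ ≤ (k : ℝ) * (3 * Real.sqrt k * ε) ^ 2 := by
            refine mul_le_mul_of_nonneg_right ?_ (sq_nonneg _)
            exact_mod_cast Finset.card_le_univ t |>.trans (by simp)
    have hsq : ‖∑ j ∈ t, ((ℂ ∙ g j).starProjection (w i))‖ ^ 2
        ≤ (3 * (k : ℝ) * ε) ^ 2 := by
      rw [hpyth]
      calc ∑ j ∈ t, ‖((ℂ ∙ g j).starProjection (w i))‖ ^ 2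
          ≤ (k : ℝ) * (3 * Real.sqrt k * ε) ^ 2 := hbd
        _ = 9 * ((k:ℝ) * Real.sqrt k ^ 2) * ε ^ 2 := by ring
        _ = (3 * (k : ℝ) * ε) ^ 2 := by rw [Real.sq_sqrt hk0.le]; ring
    have h30 : (0:ℝ) ≤ 3 * (k : ℝ) * ε := by positivity
    nlinarith [norm_nonneg (∑ j ∈ t, ((ℂ ∙ g j).starProjection (w i)))]
  -- distance from v i to g i
  have hvg : ‖v i - g i‖ ≤ (3 * k + 1) * ε := by
    have hsplit : w i - g i = ∑ j ∈ t, ((ℂ ∙ g j).starProjection (w i)) := by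
      rw [sub_eq_iff_eq_add']
      exact hdef
    have hre : v i - g i = (v i - w i) + ∑ j ∈ t, ((ℂ ∙ g j).starProjection (w i)) := by
      rw [← hsplit]; abel
    rw [hre]
    calc ‖(v i - w i) + ∑ j ∈ t, ((ℂ ∙ g j).starProjection (w i))‖
        ≤ ‖v i - w i‖ + ‖∑ j ∈ t, ((ℂ ∙ g j).starProjection (w i))‖ :=
          norm_add_le _ _
      _ ≤ ε + 3 * k * ε := add_le_add (hw i) hsum
      _ = (3 * k + 1) * ε := by ring
  -- g i is near a unit vector
  have hvi1 : ‖v i‖ = 1 := hv.1 i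
  have hsmall2 : (3 * (k:ℝ) + 1) * ε ≤ 1 / 2 := by nlinarith
  have hgnorm : |‖g i‖ - 1| ≤ (3 * k + 1) * ε := by
    have h1 := abs_norm_sub_norm_le (g i) (v i)
    rw [hvi1] at h1
    rw [norm_sub_rev] at hvg
    exact h1.trans hvg
  have hgpos : (0 : ℝ) < ‖g i‖ := by
    have := abs_le.1 hgnorm
    linarith [this.1]
  -- the normalized vector
  have hu : @InnerProductSpace.gramSchmidtNormed ℂ E _ _ _ (Fin k) _ _
      (inferInstance : WellFoundedLT (Fin k)) w i = (↑(‖g i‖)⁻¹ : ℂ) • g i := by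
    simp [InnerProductSpace.gramSchmidtNormed, hg]
  have hgu : ‖g i - (↑(‖g i‖)⁻¹ : ℂ) • g i‖ = |‖g i‖ - 1| := by
    have : g i - (↑(‖g i‖)⁻¹ : ℂ) • g i = ((1 : ℂ) - (↑(‖g i‖)⁻¹ : ℂ)) • g i := by
      rw [sub_smul, one_smul]
    rw [this, norm_smul]
    have h1 : ‖(1 : ℂ) - (↑(‖g i‖)⁻¹ : ℂ)‖ = |1 - (‖g i‖)⁻¹| := by
      rw [show (1 : ℂ) - (↑(‖g i‖)⁻¹ : ℂ) = ((1 - (‖g i‖)⁻¹ : ℝ) : ℂ) by push_cast; ring]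
      exact RCLike.norm_ofReal _
    rw [h1]
    have h2 : (1 - ‖g i‖⁻¹) * ‖g i‖ = ‖g i‖ - 1 := by field_simp
    calc |1 - ‖g i‖⁻¹| * ‖g i‖ = |(1 - ‖g i‖⁻¹) * ‖g i‖| := by
          rw [abs_mul, abs_of_pos hgpos]
      _ = |‖g i‖ - 1| := by rw [h2]
  calc ‖v i - @InnerProductSpace.gramSchmidtNormed ℂ E _ _ _ (Fin k) _ _
        (inferInstance : WellFoundedLT (Fin k)) w i‖
      = ‖v i - (↑(‖g i‖)⁻¹ : ℂ) • g i‖ := by rw [hu]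
    _ ≤ ‖v i - g i‖ + ‖g i - (↑(‖g i‖)⁻¹ : ℂ) • g i‖ := by
        have : v i - (↑(‖g i‖)⁻¹ : ℂ) • g i
            = (v i - g i) + (g i - (↑(‖g i‖)⁻¹ : ℂ) • g i) := by abel
        rw [this]; exact norm_add_le _ _
    _ ≤ (3 * k + 1) * ε + (3 * k + 1) * ε := by
        refine add_le_add hvg ?_
        rw [hgu]; exact hgnorm
    _ ≤ (64 * k + 1) * ε := by nlinarith
end

section
/- Let ⟨w_j, w_i⟩ satisfy |⟨w_j, w_i⟩| ≤ 2ε for i ≠ j and ‖w_i − v_i‖ ≤ ε with (v_i) orthonormal, ε < 1/(64k²). If φ = Σ_{l∈[j−1]} α_l w_l is a unit vector, then √(Σ_l |α_l|²) ≤ 3/√8. -/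
open scoped InnerProductSpace

/-- A unit vector in the span of nearly orthonormal vectors has coefficient
vector of bounded ℓ² norm. -/
theorem coeff_norm_bound {E : Type*} [NormedAddCommGroup E]
    [InnerProductSpace ℂ E] {k : ℕ} (v w : Fin k → E) (hv : Orthonormal ℂ v)
    (ε : ℝ) (hε : 0 < ε) (hεk : ε < 1 / (64 * (k : ℝ) ^ 2))
    (hw : ∀ i, ‖w i - v i‖ ≤ ε)
    (hnear : ∀ i j, i ≠ j → ‖⟪w i, w j⟫_ℂ‖ ≤ 2 * ε)
    (j : ℕ) (hj : j ≤ k) (α : Fin k → ℂ) (φ : E)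
    (hφ : φ = ∑ l ∈ Finset.univ.filter (fun l : Fin k => (l : ℕ) + 1 < j), α l • w l)
    (hφ1 : ‖φ‖ = 1) :
    Real.sqrt (∑ l ∈ Finset.univ.filter (fun l : Fin k => (l : ℕ) + 1 < j),
        ‖α l‖ ^ 2) ≤ 3 / Real.sqrt 8 := by
  set s : Finset (Fin k) := Finset.univ.filter (fun l : Fin k => (l : ℕ) + 1 < j) with hs
  set A : Fin k → ℝ := fun i => ‖α i‖ with hA
  set S : ℝ := ∑ l ∈ s, A l ^ 2 with hS
  have hS0 : 0 ≤ S := Finset.sum_nonneg fun i _ => sq_nonneg _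
  have hsqrt8 : (0:ℝ) < Real.sqrt 8 := Real.sqrt_pos.mpr (by norm_num)
  show Real.sqrt S ≤ 3 / Real.sqrt 8
  rcases Finset.eq_empty_or_nonempty s with hemp | ⟨i0, hi0⟩
  · rw [hS, hemp]
    simp only [Finset.sum_empty, Real.sqrt_zero]
    positivity
  have hk1 : (1:ℝ) ≤ (k:ℝ) := by exact_mod_cast i0.pos
  have hε64 : ε ≤ 1/64 := by
    have h2 : 1 / (64 * (k:ℝ)^2) ≤ 1/64 := by
      apply one_div_le_one_div_of_le
      · norm_num
      · nlinarith
    linarith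
  have hεkk : ε * (k:ℝ) ≤ 1/32 := by
    have h1 : ε * (64 * (k:ℝ)^2) < 1 := by
      rw [← lt_div_iff₀ (by nlinarith : (0:ℝ) < 64 * (k:ℝ)^2)]
      exact hεk
    nlinarith
  have hwlb : ∀ i, 1 - ε ≤ ‖w i‖ := by
    intro i
    have h1 : ‖v i‖ = 1 := hv.1 i
    have h2 := hw i
    have h3 := abs_le.mp (abs_norm_sub_norm_le (w i) (v i))
    rw [h1] at h3
    linarith [h3.1, h3.2]
  have hexp : (1:ℝ) = ∑ i ∈ s, ∑ l ∈ s, (starRingEnd ℂ (α i) * α l * ⟪w i, w l⟫_ℂ).re := by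
    have h0 : ⟪φ, φ⟫_ℂ = ∑ i ∈ s, ∑ l ∈ s, starRingEnd ℂ (α i) * α l * ⟪w i, w l⟫_ℂ := by
      rw [hφ, sum_inner]
      refine Finset.sum_congr rfl fun i _ => ?_
      rw [inner_sum]
      refine Finset.sum_congr rfl fun l _ => ?_
      rw [inner_smul_left, inner_smul_right]; ring
    have h1 : (⟪φ, φ⟫_ℂ).re = ‖φ‖^2 := by
      rw [inner_self_eq_norm_sq_to_K]; norm_cast
    have h2 : ‖φ‖^2 = 1 := by rw [hφ1]; norm_num
    calc (1:ℝ) = (⟪φ, φ⟫_ℂ).re := by rw [h1, h2]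
      _ = ∑ i ∈ s, ∑ l ∈ s, (starRingEnd ℂ (α i) * α l * ⟪w i, w l⟫_ℂ).re := by
          rw [h0, Complex.re_sum]
          exact Finset.sum_congr rfl fun i _ => Complex.re_sum _ _
  have hdiag : ∀ i : Fin k, (1 - 2*ε) * A i ^ 2 ≤ (starRingEnd ℂ (α i) * α i * ⟪w i, w i⟫_ℂ).re := by
    intro i
    have heq : (starRingEnd ℂ (α i) * α i * ⟪w i, w i⟫_ℂ).re = A i ^ 2 * ‖w i‖ ^ 2 := by
      have h : ⟪w i, w i⟫_ℂ = ((‖w i‖:ℝ) : ℂ)^2 := inner_self_eq_norm_sq_to_K (w i)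
      rw [h, mul_comm (starRingEnd ℂ (α i)) (α i), Complex.mul_conj, Complex.sq_norm]
      norm_cast
    rw [heq]
    have h1 : 1 - ε ≤ ‖w i‖ := hwlb i
    have h2 : (1-ε)^2 ≤ ‖w i‖^2 := by nlinarith
    nlinarith [sq_nonneg (A i), sq_nonneg (A i * ε)]
  have hoff : ∀ i l : Fin k, i ≠ l → -(2*ε * (A i * A l)) ≤ (starRingEnd ℂ (α i) * α l * ⟪w i, w l⟫_ℂ).re := by
    intro i l hil
    have h1 : |(starRingEnd ℂ (α i) * α l * ⟪w i, w l⟫_ℂ).re| ≤ A i * A l * (2*ε) := by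
      refine le_trans (Complex.abs_re_le_norm _) ?_
      rw [norm_mul, norm_mul, Complex.norm_conj]
      exact mul_le_mul_of_nonneg_left (hnear i l hil) (by positivity)
    have h2 := neg_abs_le ((starRingEnd ℂ (α i) * α l * ⟪w i, w l⟫_ℂ).re)
    nlinarith
  have hA0 : ∀ i, 0 ≤ A i := fun i => norm_nonneg _
  set T : ℝ := ∑ i ∈ s, A i with hT
  have hT0 : 0 ≤ T := Finset.sum_nonneg fun i _ => hA0 i
  have hcs : T^2 ≤ (k:ℝ) * S := by
    have h1 : T^2 ≤ (s.card : ℝ) * S := by exact_mod_cast sq_sum_le_card_mul_sum_sq (s := s) (f := A)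
    have h2 : (s.card : ℝ) ≤ (k:ℝ) := by
      have := Finset.card_le_card (Finset.filter_subset (fun l : Fin k => (l : ℕ) + 1 < j) Finset.univ)
      simp only [Finset.card_univ, Fintype.card_fin] at this
      exact_mod_cast this
    exact h1.trans (mul_le_mul_of_nonneg_right h2 hS0)
  have hmain : (1 - 2*ε) * S - 2*ε * T^2 ≤ 1 := by
    have step : ∀ i ∈ s, (1 - 2*ε) * A i ^2 - 2*ε * (A i * T) ≤
        ∑ l ∈ s, (starRingEnd ℂ (α i) * α l * ⟪w i, w l⟫_ℂ).re := by
      intro i hi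
      rw [← Finset.add_sum_erase _ _ hi]
      have h4 : (2*ε*(A i * T)) = ∑ l ∈ s, (2*ε*(A i * A l)) := by
        rw [hT, Finset.mul_sum, Finset.mul_sum]
      have h3 : ∑ l ∈ s.erase i, (2*ε*(A i * A l)) ≤ ∑ l ∈ s, (2*ε*(A i * A l)) :=
        Finset.sum_le_sum_of_subset_of_nonneg (Finset.erase_subset _ _)
          (fun l _ _ => by positivity)
      have h1 : ∑ l ∈ s.erase i, -(2*ε * (A i * A l)) ≤
          ∑ l ∈ s.erase i, (starRingEnd ℂ (α i) * α l * ⟪w i, w l⟫_ℂ).re :=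
        Finset.sum_le_sum fun l hl => hoff i l (Finset.ne_of_mem_erase hl).symm
      have h2 : -(2*ε * (A i * T)) ≤ ∑ l ∈ s.erase i, -(2*ε * (A i * A l)) := by
        rw [Finset.sum_neg_distrib]
        linarith
      linarith [hdiag i]
    have hsum : ∑ i ∈ s, ((1 - 2*ε) * A i ^2 - 2*ε * (A i * T)) ≤
        ∑ i ∈ s, ∑ l ∈ s, (starRingEnd ℂ (α i) * α l * ⟪w i, w l⟫_ℂ).re :=
      Finset.sum_le_sum step
    have heq2 : ∑ i ∈ s, ((1 - 2*ε) * A i ^2 - 2*ε * (A i * T)) = (1 - 2*ε) * S - 2*ε * T^2 := by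
      rw [Finset.sum_sub_distrib, ← Finset.mul_sum, ← hS]
      congr 1
      rw [← Finset.mul_sum, ← Finset.sum_mul, ← hT, sq]
    calc (1 - 2*ε) * S - 2*ε * T^2 = ∑ i ∈ s, ((1 - 2*ε) * A i ^2 - 2*ε * (A i * T)) := heq2.symm
      _ ≤ ∑ i ∈ s, ∑ l ∈ s, (starRingEnd ℂ (α i) * α l * ⟪w i, w l⟫_ℂ).re := hsum
      _ = 1 := hexp.symm
  have hSle : S ≤ 9/8 := by nlinarith
  calc Real.sqrt S ≤ Real.sqrt (9/8) := Real.sqrt_le_sqrt hSle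
    _ ≤ 3 / Real.sqrt 8 := by
        rw [Real.sqrt_div (by norm_num : (0:ℝ) ≤ 9) 8,
          show Real.sqrt 9 = 3 by
            rw [show (9:ℝ) = 3^2 by norm_num, Real.sqrt_sq (by norm_num : (0:ℝ) ≤ 3)]]
end
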